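/- Stability and bounded drift of the Baumgarte stabilized method: under the Baumgarte stabilized domain decomposition method with parameter α > 0, if for each i the matrix Ã_i := α*·M_i + Δt·(γ − 1/2)·K_i is positive semidefinite, where α* := 1 + α·(γ − 1/2), then there exists a constant C > 0 such that for all i ∈ {1,…,S} and all n ∈ ℕ, ‖v_i(n)‖ ≤ C, and moreover the drift in the original constraint is bounded: ‖∑_{i=1}^S C_i·d_i(n)‖ = (Δt/α)·‖∑_{i=1}^S C_i·v_i(n)‖ ≤ C for all n ∈ ℕ. -/

import Mathlib

open Matrix

/-- The Euclidean norm of a vector indexed by `Fin k`. -/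
noncomputable def enorm {k : ℕ} (x : Fin k → ℝ) : ℝ := Real.sqrt (x ⬝ᵥ x)


namespace BMAux

lemma dot_self_nonneg {k : ℕ} (x : Fin k → ℝ) : 0 ≤ x ⬝ᵥ x :=
  Finset.sum_nonneg fun i _ => mul_self_nonneg _

lemma sq_le_dot_self {k : ℕ} (x : Fin k → ℝ) (i : Fin k) : x i * x i ≤ x ⬝ᵥ x :=
  Finset.single_le_sum (fun j _ => mul_self_nonneg (x j)) (Finset.mem_univ i)

lemma psd_nonneg {k : ℕ} {A : Matrix (Fin k) (Fin k) ℝ} (hA : A.PosSemidef)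
    (x : Fin k → ℝ) : 0 ≤ x ⬝ᵥ A.mulVec x := by
  simpa using hA.dotProduct_mulVec_nonneg x

lemma herm_dot_comm {k : ℕ} {A : Matrix (Fin k) (Fin k) ℝ} (hA : A.IsHermitian)
    (x y : Fin k → ℝ) : x ⬝ᵥ A.mulVec y = y ⬝ᵥ A.mulVec x := by
  have ht : Aᵀ = A := by
    have := hA.eq
    simpa using this
  calc x ⬝ᵥ A.mulVec y = (x ᵥ* A) ⬝ᵥ y := dotProduct_mulVec x A y
    _ = (Aᵀ.mulVec x) ⬝ᵥ y := by rw [mulVec_transpose]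
    _ = (A.mulVec x) ⬝ᵥ y := by rw [ht]
    _ = y ⬝ᵥ A.mulVec x := dotProduct_comm _ _

lemma dot_transpose_mulVec {m k : ℕ} (A : Matrix (Fin m) (Fin k) ℝ)
    (x : Fin k → ℝ) (l : Fin m → ℝ) : x ⬝ᵥ Aᵀ.mulVec l = l ⬝ᵥ A.mulVec x := by
  rw [mulVec_transpose, dotProduct_comm, ← dotProduct_mulVec]

lemma psd_cs {k : ℕ} {A : Matrix (Fin k) (Fin k) ℝ} (hA : A.PosSemidef)
    (x y : Fin k → ℝ) :
    (x ⬝ᵥ A.mulVec y)^2 ≤ (x ⬝ᵥ A.mulVec x) * (y ⬝ᵥ A.mulVec y) := by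
  have h : ∀ t : ℝ, 0 ≤ (y ⬝ᵥ A.mulVec y) * (t*t) + (2*(x ⬝ᵥ A.mulVec y))*t
      + (x ⬝ᵥ A.mulVec x) := by
    intro t
    have h0 := psd_nonneg hA (x + t • y)
    have hsym := herm_dot_comm hA.1 y x
    have expand : (x + t • y) ⬝ᵥ A.mulVec (x + t • y)
        = (y ⬝ᵥ A.mulVec y) * (t*t) + (2*(x ⬝ᵥ A.mulVec y))*t + (x ⬝ᵥ A.mulVec x) := by
      simp only [mulVec_add, mulVec_smul, dotProduct_add, add_dotProduct,
        dotProduct_smul, smul_dotProduct, smul_eq_mul]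
      rw [hsym]; ring
    rw [expand] at h0
    exact h0
  have hd := discrim_le_zero h
  rw [discrim] at hd
  nlinarith [hd]

lemma psd_cs_abs {k : ℕ} {A : Matrix (Fin k) (Fin k) ℝ} (hA : A.PosSemidef)
    (x y : Fin k → ℝ) :
    |x ⬝ᵥ A.mulVec y| ≤ Real.sqrt (x ⬝ᵥ A.mulVec x) * Real.sqrt (y ⬝ᵥ A.mulVec y) := by
  calc |x ⬝ᵥ A.mulVec y| = Real.sqrt ((x ⬝ᵥ A.mulVec y)^2) := (Real.sqrt_sq_eq_abs _).symm
    _ ≤ Real.sqrt ((x ⬝ᵥ A.mulVec x) * (y ⬝ᵥ A.mulVec y)) :=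
        Real.sqrt_le_sqrt (psd_cs hA x y)
    _ = _ := Real.sqrt_mul (psd_nonneg hA x) _

lemma abs_entry_le_sqrt {k : ℕ} (x : Fin k → ℝ) (i : Fin k) :
    |x i| ≤ Real.sqrt (x ⬝ᵥ x) := by
  rw [← Real.sqrt_sq_eq_abs]
  exact Real.sqrt_le_sqrt (by simpa [sq] using sq_le_dot_self x i)

lemma dot_mulVec_le {k : ℕ} (B : Matrix (Fin k) (Fin k) ℝ) (x : Fin k → ℝ) :
    x ⬝ᵥ B.mulVec x ≤ (∑ i, ∑ j, |B i j|) * (x ⬝ᵥ x) := by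
  have habs : ∀ i j : Fin k, x i * (B i j * x j) ≤ |B i j| * (x ⬝ᵥ x) := by
    intro i j
    calc x i * (B i j * x j) ≤ |x i * (B i j * x j)| := le_abs_self _
      _ = |B i j| * (|x i| * |x j|) := by rw [abs_mul, abs_mul]; ring
      _ ≤ |B i j| * (Real.sqrt (x ⬝ᵥ x) * Real.sqrt (x ⬝ᵥ x)) := by
          refine mul_le_mul_of_nonneg_left ?_ (abs_nonneg _)
          exact mul_le_mul (abs_entry_le_sqrt x i) (abs_entry_le_sqrt x j)
            (abs_nonneg _) (Real.sqrt_nonneg _)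
      _ = |B i j| * (x ⬝ᵥ x) := by rw [Real.mul_self_sqrt (dot_self_nonneg x)]
  calc x ⬝ᵥ B.mulVec x = ∑ i, ∑ j, x i * (B i j * x j) := by
        simp [dotProduct, mulVec, Finset.mul_sum]
    _ ≤ ∑ i, ∑ j, |B i j| * (x ⬝ᵥ x) := by
        refine Finset.sum_le_sum fun i _ => Finset.sum_le_sum fun j _ => habs i j
    _ = (∑ i, ∑ j, |B i j|) * (x ⬝ᵥ x) := by rw [Finset.sum_mul]
        <;> simp [Finset.sum_mul]

lemma posdef_coercive {k : ℕ} {A : Matrix (Fin k) (Fin k) ℝ} (hA : A.PosDef) :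
    ∃ μ : ℝ, 0 < μ ∧ ∀ x : Fin k → ℝ, μ * (x ⬝ᵥ x) ≤ x ⬝ᵥ A.mulVec x := by
  set B := A⁻¹ with hB
  have hcnn : (0:ℝ) ≤ ∑ i, ∑ j, |B i j| :=
    Finset.sum_nonneg fun i _ => Finset.sum_nonneg fun j _ => abs_nonneg _
  set c : ℝ := (∑ i, ∑ j, |B i j|) + 1 with hc
  have hcpos : 0 < c := by linarith
  refine ⟨1/c, by positivity, ?_⟩
  intro x
  have hAx : 0 ≤ x ⬝ᵥ A.mulVec x := psd_nonneg hA.posSemidef x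
  have hdet : IsUnit A.det := hA.det_pos.ne'.isUnit
  have hABx : A.mulVec (B.mulVec x) = x := by
    rw [mulVec_mulVec, hB, mul_nonsing_inv _ hdet, one_mulVec]
  have hcs := psd_cs hA.posSemidef x (B.mulVec x)
  rw [hABx] at hcs
  have h2 : (B.mulVec x) ⬝ᵥ x ≤ c * (x ⬝ᵥ x) := by
    rw [dotProduct_comm]
    have h3 := dot_mulVec_le B x
    nlinarith [dot_self_nonneg x]
  by_cases hx : x ⬝ᵥ x = 0
  · rw [hx, mul_zero]; exact hAx
  · have hxpos : 0 < x ⬝ᵥ x := lt_of_le_of_ne (dot_self_nonneg x) (Ne.symm hx)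
    have h4 : (x ⬝ᵥ x)^2 ≤ (x ⬝ᵥ A.mulVec x) * (c * (x ⬝ᵥ x)) := by
      calc (x ⬝ᵥ x)^2 ≤ (x ⬝ᵥ A.mulVec x) * ((B.mulVec x) ⬝ᵥ x) := hcs
        _ ≤ (x ⬝ᵥ A.mulVec x) * (c * (x ⬝ᵥ x)) := mul_le_mul_of_nonneg_left h2 hAx
    rw [div_mul_eq_mul_div, div_le_iff₀ hcpos]
    nlinarith [h4, hxpos]

lemma dominated {k : ℕ} (Q A : Matrix (Fin k) (Fin k) ℝ) (hA : A.PosDef) :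
    ∃ κ : ℝ, 0 < κ ∧ ∀ x : Fin k → ℝ, x ⬝ᵥ Q.mulVec x ≤ κ * (x ⬝ᵥ A.mulVec x) := by
  obtain ⟨μ, hμ, hco⟩ := posdef_coercive hA
  have hcnn : (0:ℝ) ≤ ∑ i, ∑ j, |Q i j| :=
    Finset.sum_nonneg fun i _ => Finset.sum_nonneg fun j _ => abs_nonneg _
  set c : ℝ := (∑ i, ∑ j, |Q i j|) + 1 with hc
  have hcpos : 0 < c := by linarith
  refine ⟨c/μ, by positivity, fun x => ?_⟩
  have h1 : x ⬝ᵥ Q.mulVec x ≤ c * (x ⬝ᵥ x) := by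
    have := dot_mulVec_le Q x
    nlinarith [dot_self_nonneg x]
  have h2 := hco x
  calc x ⬝ᵥ Q.mulVec x ≤ c * (x ⬝ᵥ x) := h1
    _ = (c/μ) * (μ * (x ⬝ᵥ x)) := by field_simp
    _ ≤ (c/μ) * (x ⬝ᵥ A.mulVec x) := by
        refine mul_le_mul_of_nonneg_left h2 (by positivity)

lemma dot_sq {k : ℕ} (x : Fin k → ℝ) : x ⬝ᵥ x = ∑ i, (x i)^2 := by
  simp [dotProduct, sq]

lemma mulVec_dot_dominated {mm k : ℕ} (Cc : Matrix (Fin mm) (Fin k) ℝ)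
    (A : Matrix (Fin k) (Fin k) ℝ) (hA : A.PosDef) :
    ∃ κ : ℝ, 0 < κ ∧ ∀ x : Fin k → ℝ,
      (Cc.mulVec x) ⬝ᵥ (Cc.mulVec x) ≤ κ * (x ⬝ᵥ A.mulVec x) := by
  obtain ⟨μ, hμ, hco⟩ := posdef_coercive hA
  have hcnn : (0:ℝ) ≤ ∑ r, ∑ j, (Cc r j)^2 :=
    Finset.sum_nonneg fun r _ => Finset.sum_nonneg fun j _ => sq_nonneg _
  set c : ℝ := (∑ r, ∑ j, (Cc r j)^2) + 1 with hc
  have hcpos : 0 < c := by linarith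
  refine ⟨c/μ, by positivity, fun x => ?_⟩
  have hrow : ∀ r, (Cc.mulVec x r)^2 ≤ (∑ j, (Cc r j)^2) * (x ⬝ᵥ x) := by
    intro r
    have h := Finset.sum_mul_sq_le_sq_mul_sq Finset.univ (fun j => Cc r j) x
    calc (Cc.mulVec x r)^2 = (∑ j, Cc r j * x j)^2 := by simp [mulVec, dotProduct]
      _ ≤ (∑ j, (Cc r j)^2) * (∑ j, (x j)^2) := h
      _ = (∑ j, (Cc r j)^2) * (x ⬝ᵥ x) := by rw [dot_sq x]
  have h1 : (Cc.mulVec x) ⬝ᵥ (Cc.mulVec x) ≤ c * (x ⬝ᵥ x) := by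
    calc (Cc.mulVec x) ⬝ᵥ (Cc.mulVec x) = ∑ r, (Cc.mulVec x r)^2 := dot_sq _
      _ ≤ ∑ r, (∑ j, (Cc r j)^2) * (x ⬝ᵥ x) := Finset.sum_le_sum fun r _ => hrow r
      _ = (∑ r, ∑ j, (Cc r j)^2) * (x ⬝ᵥ x) := by rw [Finset.sum_mul]
      _ ≤ c * (x ⬝ᵥ x) := by
          have := dot_self_nonneg x
          nlinarith
  calc (Cc.mulVec x) ⬝ᵥ (Cc.mulVec x) ≤ c * (x ⬝ᵥ x) := h1
    _ = (c/μ) * (μ * (x ⬝ᵥ x)) := by field_simp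
    _ ≤ (c/μ) * (x ⬝ᵥ A.mulVec x) := mul_le_mul_of_nonneg_left (hco x) (by positivity)

lemma enorm_nonneg' {k : ℕ} (x : Fin k → ℝ) : 0 ≤ _root_.enorm x := Real.sqrt_nonneg _

lemma enorm_le_of_dot_le {k : ℕ} {x : Fin k → ℝ} {a : ℝ} (ha : 0 ≤ a)
    (h : x ⬝ᵥ x ≤ a^2) : _root_.enorm x ≤ a := by
  calc _root_.enorm x ≤ Real.sqrt (a^2) := Real.sqrt_le_sqrt h
    _ = a := Real.sqrt_sq ha

lemma enorm_sq_le {k : ℕ} {x : Fin k → ℝ} {a : ℝ} (h : x ⬝ᵥ x ≤ a) :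
    _root_.enorm x ≤ Real.sqrt a := Real.sqrt_le_sqrt h

lemma enorm_smul {k : ℕ} (c : ℝ) (x : Fin k → ℝ) : _root_.enorm (c • x) = |c| * _root_.enorm x := by
  have h : (c • x) ⬝ᵥ (c • x) = c^2 * (x ⬝ᵥ x) := by
    rw [smul_dotProduct, dotProduct_smul, smul_eq_mul, smul_eq_mul]; ring
  rw [_root_.enorm, h, Real.sqrt_mul (sq_nonneg c), Real.sqrt_sq_eq_abs, _root_.enorm]

lemma dot_cs_abs {k : ℕ} (x y : Fin k → ℝ) :
    |x ⬝ᵥ y| ≤ Real.sqrt (x ⬝ᵥ x) * Real.sqrt (y ⬝ᵥ y) := by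
  have h := Finset.sum_mul_sq_le_sq_mul_sq Finset.univ x y
  calc |x ⬝ᵥ y| = Real.sqrt ((x ⬝ᵥ y)^2) := (Real.sqrt_sq_eq_abs _).symm
    _ ≤ Real.sqrt ((x ⬝ᵥ x) * (y ⬝ᵥ y)) := by
        refine Real.sqrt_le_sqrt ?_
        calc (x ⬝ᵥ y)^2 = (∑ i, x i * y i)^2 := by rw [dotProduct]
          _ ≤ (∑ i, (x i)^2) * (∑ i, (y i)^2) := h
          _ = (x ⬝ᵥ x) * (y ⬝ᵥ y) := by rw [← dot_sq, ← dot_sq]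
    _ = _ := Real.sqrt_mul (dot_self_nonneg x) _

lemma enorm_add_le {k : ℕ} (x y : Fin k → ℝ) : _root_.enorm (x + y) ≤ _root_.enorm x + _root_.enorm y := by
  have hxy : x ⬝ᵥ y ≤ Real.sqrt (x ⬝ᵥ x) * Real.sqrt (y ⬝ᵥ y) :=
    le_trans (le_abs_self _) (dot_cs_abs x y)
  refine enorm_le_of_dot_le (add_nonneg (enorm_nonneg' x) (enorm_nonneg' y)) ?_
  have hexp : (x + y) ⬝ᵥ (x + y) = x ⬝ᵥ x + 2 * (x ⬝ᵥ y) + y ⬝ᵥ y := by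
    rw [dotProduct_add, add_dotProduct, add_dotProduct, dotProduct_comm y x]; ring
  rw [hexp]
  have h1 : Real.sqrt (x ⬝ᵥ x) ^ 2 = x ⬝ᵥ x := Real.sq_sqrt (dot_self_nonneg x)
  have h2 : Real.sqrt (y ⬝ᵥ y) ^ 2 = y ⬝ᵥ y := Real.sq_sqrt (dot_self_nonneg y)
  rw [_root_.enorm, _root_.enorm]
  nlinarith [hxy, h1, h2]

lemma enorm_zero {k : ℕ} : _root_.enorm (0 : Fin k → ℝ) = 0 := by
  simp [_root_.enorm]

lemma enorm_sum_le {k : ℕ} {ι : Type*} (s : Finset ι) (f : ι → (Fin k → ℝ)) :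
    _root_.enorm (∑ i ∈ s, f i) ≤ ∑ i ∈ s, _root_.enorm (f i) := by
  induction s using Finset.cons_induction with
  | empty => simp [enorm_zero]
  | cons a s ha ih =>
      rw [Finset.sum_cons, Finset.sum_cons]
      exact le_trans (enorm_add_le _ _) (by linarith)

lemma dot_sum {k : ℕ} {ι : Type*} (s : Finset ι) (l : Fin k → ℝ)
    (f : ι → (Fin k → ℝ)) : l ⬝ᵥ (∑ i ∈ s, f i) = ∑ i ∈ s, l ⬝ᵥ f i := by
  simp only [dotProduct, Finset.sum_apply, Finset.mul_sum]
  exact Finset.sum_comm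

end BMAux

open BMAux in
/-- Stability and bounded drift of the Baumgarte stabilized method: with parameter
`α > 0` and each `Ãᵢ = α*·Mᵢ + Δt·(γ - 1/2)·Kᵢ` (where `α* = 1 + α·(γ - 1/2)`)
positive semidefinite, the rates `vᵢ(n)` are uniformly bounded, and the drift in the
original constraint satisfies
`‖∑ᵢ Cᵢ·dᵢ(n)‖ = (Δt/α)·‖∑ᵢ Cᵢ·vᵢ(n)‖ ≤ C` for all `n`. -/
theorem baumgarte_stable_and_drift_bounded
    (S m : ℕ) (hS : 1 ≤ S) (nn : Fin S → ℕ)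
    (M K : ∀ i : Fin S, Matrix (Fin (nn i)) (Fin (nn i)) ℝ)
    (hM : ∀ i, (M i).PosDef) (hK : ∀ i, (K i).PosSemidef)
    (C : ∀ i : Fin S, Matrix (Fin m) (Fin (nn i)) ℝ)
    (Δt γ α : ℝ) (hΔt : 0 < Δt) (hγ₀ : 0 ≤ γ) (hγ₁ : γ ≤ 1) (hα : 0 < α)
    (hAt : ∀ i, ((1 + α * (γ - 1/2)) • M i + (Δt * (γ - 1/2)) • K i).PosSemidef)
    (d v : ∀ i : Fin S, ℕ → (Fin (nn i) → ℝ)) (lam : ℕ → (Fin m → ℝ))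
    (heq : ∀ i n, (M i).mulVec (v i n) + (K i).mulVec (d i n) = (C i)ᵀ.mulVec (lam n))
    (hupd : ∀ i n, d i (n + 1) = d i n + Δt • ((1 - γ) • v i n + γ • v i (n + 1)))
    (hcont : ∀ n, ∑ i : Fin S, (C i).mulVec (v i n) +
      (α / Δt) • ∑ i : Fin S, (C i).mulVec (d i n) = 0) :
    ∃ C₀ > (0 : ℝ),
      (∀ i : Fin S, ∀ n : ℕ, _root_.enorm (v i n) ≤ C₀) ∧
      (∀ n : ℕ,
        _root_.enorm (∑ i : Fin S, (C i).mulVec (d i n)) =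
          (Δt / α) * _root_.enorm (∑ i : Fin S, (C i).mulVec (v i n)) ∧
        _root_.enorm (∑ i : Fin S, (C i).mulVec (d i n)) ≤ C₀) := by
  classical
  have hΔt' : Δt ≠ 0 := ne_of_gt hΔt
  have hα' : α ≠ 0 := ne_of_gt hα
  set β : ℝ := α / Δt with hβdef
  have hβ : 0 < β := div_pos hα hΔt
  have hβΔ : β * Δt = α := by rw [hβdef]; exact div_mul_cancel₀ α hΔt'
  have hMsym : ∀ i, ∀ x y : Fin (nn i) → ℝ,
      x ⬝ᵥ (M i).mulVec y = y ⬝ᵥ (M i).mulVec x := fun i => herm_dot_comm (hM i).1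
  have hKsym : ∀ i, ∀ x y : Fin (nn i) → ℝ,
      x ⬝ᵥ (K i).mulVec y = y ⬝ᵥ (K i).mulVec x := fun i => herm_dot_comm (hK i).1
  -- the basic pairing identity coming from `∑ᵢ Cᵢ (v + β d) = 0`
  have pairing : ∀ (vv dd : ∀ i : Fin S, Fin (nn i) → ℝ) (ll : Fin m → ℝ),
      (∀ i, (M i).mulVec (vv i) + (K i).mulVec (dd i) = (C i)ᵀ.mulVec ll) →
      ((∑ i, (C i).mulVec (vv i)) + β • (∑ i, (C i).mulVec (dd i)) = 0) →
      (∑ i, (vv i ⬝ᵥ (M i).mulVec (vv i) + vv i ⬝ᵥ (K i).mulVec (dd i)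
        + β * (dd i ⬝ᵥ (M i).mulVec (vv i) + dd i ⬝ᵥ (K i).mulVec (dd i)))) = 0 := by
    intro vv dd ll hq hc
    have h1 : ∀ i : Fin S, vv i ⬝ᵥ (M i).mulVec (vv i) + vv i ⬝ᵥ (K i).mulVec (dd i)
        + β * (dd i ⬝ᵥ (M i).mulVec (vv i) + dd i ⬝ᵥ (K i).mulVec (dd i))
        = ll ⬝ᵥ ((C i).mulVec (vv i + β • dd i)) := by
      intro i
      have e1 : (vv i + β • dd i) ⬝ᵥ ((M i).mulVec (vv i) + (K i).mulVec (dd i))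
          = vv i ⬝ᵥ (M i).mulVec (vv i) + vv i ⬝ᵥ (K i).mulVec (dd i)
            + β * (dd i ⬝ᵥ (M i).mulVec (vv i) + dd i ⬝ᵥ (K i).mulVec (dd i)) := by
        simp only [dotProduct_add, add_dotProduct, smul_dotProduct, smul_eq_mul]
        ring
      rw [← e1, hq i, dot_transpose_mulVec]
    have hs := Finset.sum_congr rfl (fun i (_ : i ∈ Finset.univ) => h1 i)
    rw [hs, ← dot_sum]
    have hsplit : (∑ i, (C i).mulVec (vv i + β • dd i))
        = (∑ i, (C i).mulVec (vv i)) + β • (∑ i, (C i).mulVec (dd i)) := by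
      rw [Finset.smul_sum, ← Finset.sum_add_distrib]
      exact Finset.sum_congr rfl fun i _ => by rw [Matrix.mulVec_add, Matrix.mulVec_smul]
    rw [hsplit, hc, dotProduct_zero]
  -- quadratic expansion helper
  have quadd : ∀ (i : Fin S) (Q : Matrix (Fin (nn i)) (Fin (nn i)) ℝ),
      (∀ x y : Fin (nn i) → ℝ, x ⬝ᵥ Q.mulVec y = y ⬝ᵥ Q.mulVec x) →
      ∀ (a b : Fin (nn i) → ℝ) (s t : ℝ),
      (a + s • b) ⬝ᵥ Q.mulVec (a + s • b) - (a + t • b) ⬝ᵥ Q.mulVec (a + t • b)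
        = (s - t) * (2 * (a ⬝ᵥ Q.mulVec b)) + (s^2 - t^2) * (b ⬝ᵥ Q.mulVec b) := by
    intro i Q hsym a b s t
    have h := hsym b a
    simp only [Matrix.mulVec_add, Matrix.mulVec_smul, dotProduct_add, add_dotProduct,
      dotProduct_smul, smul_dotProduct, smul_eq_mul]
    rw [h]; ring
  -- the discrete energy
  set FF : ℕ → ℝ := fun n => ∑ i, (d i n ⬝ᵥ (K i).mulVec (d i n)
    + β * (d i n ⬝ᵥ (M i).mulVec (d i n))) with hFF
  have hterm_nonneg : ∀ (i : Fin S) (n : ℕ), 0 ≤ d i n ⬝ᵥ (K i).mulVec (d i n)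
      + β * (d i n ⬝ᵥ (M i).mulVec (d i n)) := fun i n =>
    add_nonneg (psd_nonneg (hK i) _) (mul_nonneg hβ.le (psd_nonneg (hM i).posSemidef _))
  have hFnonneg : ∀ n, 0 ≤ FF n := fun n => Finset.sum_nonneg fun i _ => hterm_nonneg i n
  -- energy decay
  have hFstep : ∀ n, FF (n+1) ≤ FF n := by
    intro n
    set vb : ∀ i : Fin S, Fin (nn i) → ℝ :=
      fun i => (1-γ) • v i n + γ • v i (n+1) with hvbdef
    set db : ∀ i : Fin S, Fin (nn i) → ℝ :=
      fun i => (1-γ) • d i n + γ • d i (n+1) with hdbdef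
    set lamb : Fin m → ℝ := (1-γ) • lam n + γ • lam (n+1) with hlambdef
    have hd1 : ∀ i, d i (n+1) = db i + ((1-γ)*Δt) • vb i := by
      intro i; funext j
      have h := congrFun (hupd i n) j
      simp only [Pi.add_apply, Pi.smul_apply, smul_eq_mul] at h
      simp only [hdbdef, hvbdef, Pi.add_apply, Pi.smul_apply, smul_eq_mul]
      rw [h]; ring
    have hd0 : ∀ i, d i n = db i + (-(γ*Δt)) • vb i := by
      intro i; funext j
      have h := congrFun (hupd i n) j
      simp only [Pi.add_apply, Pi.smul_apply, smul_eq_mul] at h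
      simp only [hdbdef, hvbdef, Pi.add_apply, Pi.smul_apply, smul_eq_mul]
      rw [h]; ring
    have heqb : ∀ i, (M i).mulVec (vb i) + (K i).mulVec (db i) = (C i)ᵀ.mulVec lamb := by
      intro i
      calc (M i).mulVec (vb i) + (K i).mulVec (db i)
          = (1-γ) • ((M i).mulVec (v i n) + (K i).mulVec (d i n))
            + γ • ((M i).mulVec (v i (n+1)) + (K i).mulVec (d i (n+1))) := by
            simp only [hvbdef, hdbdef, Matrix.mulVec_add, Matrix.mulVec_smul, smul_add]
            abel
        _ = (1-γ) • ((C i)ᵀ.mulVec (lam n)) + γ • ((C i)ᵀ.mulVec (lam (n+1))) := by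
            rw [heq i n, heq i (n+1)]
        _ = (C i)ᵀ.mulVec lamb := by
            simp only [hlambdef, Matrix.mulVec_add, Matrix.mulVec_smul]
    have hcontb : (∑ i, (C i).mulVec (vb i)) + β • (∑ i, (C i).mulVec (db i)) = 0 := by
      have h0 := hcont n
      have h1 := hcont (n+1)
      have e1 : (∑ i, (C i).mulVec (vb i)) = (1-γ) • (∑ i, (C i).mulVec (v i n))
          + γ • (∑ i, (C i).mulVec (v i (n+1))) := by
        rw [Finset.smul_sum, Finset.smul_sum, ← Finset.sum_add_distrib]
        exact Finset.sum_congr rfl fun i _ => by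
          simp only [hvbdef, Matrix.mulVec_add, Matrix.mulVec_smul]
      have e2 : (∑ i, (C i).mulVec (db i)) = (1-γ) • (∑ i, (C i).mulVec (d i n))
          + γ • (∑ i, (C i).mulVec (d i (n+1))) := by
        rw [Finset.smul_sum, Finset.smul_sum, ← Finset.sum_add_distrib]
        exact Finset.sum_congr rfl fun i _ => by
          simp only [hdbdef, Matrix.mulVec_add, Matrix.mulVec_smul]
      rw [e1, e2]
      have hgoal : ((1-γ) • (∑ i, (C i).mulVec (v i n)) + γ • (∑ i, (C i).mulVec (v i (n+1))))
          + β • ((1-γ) • (∑ i, (C i).mulVec (d i n)) + γ • (∑ i, (C i).mulVec (d i (n+1))))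
          = (1-γ) • ((∑ i, (C i).mulVec (v i n)) + β • (∑ i, (C i).mulVec (d i n)))
          + γ • ((∑ i, (C i).mulVec (v i (n+1))) + β • (∑ i, (C i).mulVec (d i (n+1)))) := by
        simp only [smul_add, smul_smul]
        rw [mul_comm β (1-γ), mul_comm β γ]
        abel
      rw [hgoal, h0, h1, smul_zero, smul_zero, add_zero]
    have E1 := pairing vb db lamb heqb hcontb
    have hKd : ∀ i, d i (n+1) ⬝ᵥ (K i).mulVec (d i (n+1)) - d i n ⬝ᵥ (K i).mulVec (d i n)
        = Δt * (2 * (vb i ⬝ᵥ (K i).mulVec (db i)))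
          + (Δt^2*(1-2*γ)) * (vb i ⬝ᵥ (K i).mulVec (vb i)) := by
      intro i
      have h := quadd i (K i) (hKsym i) (db i) (vb i) ((1-γ)*Δt) (-(γ*Δt))
      rw [← hd1 i, ← hd0 i] at h
      rw [hKsym i (db i) (vb i)] at h
      linear_combination h
    have hMd : ∀ i, d i (n+1) ⬝ᵥ (M i).mulVec (d i (n+1)) - d i n ⬝ᵥ (M i).mulVec (d i n)
        = Δt * (2 * (db i ⬝ᵥ (M i).mulVec (vb i)))
          + (Δt^2*(1-2*γ)) * (vb i ⬝ᵥ (M i).mulVec (vb i)) := by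
      intro i
      have h := quadd i (M i) (hMsym i) (db i) (vb i) ((1-γ)*Δt) (-(γ*Δt))
      rw [← hd1 i, ← hd0 i] at h
      linear_combination h
    set SA : ℝ := ∑ i, vb i ⬝ᵥ (M i).mulVec (vb i) with hSA
    set SB : ℝ := ∑ i, vb i ⬝ᵥ (K i).mulVec (db i) with hSB
    set SC : ℝ := ∑ i, db i ⬝ᵥ (M i).mulVec (vb i) with hSC
    set SE : ℝ := ∑ i, db i ⬝ᵥ (K i).mulVec (db i) with hSE
    set SF : ℝ := ∑ i, vb i ⬝ᵥ (K i).mulVec (vb i) with hSF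
    have E1' : SA + SB + β * (SC + SE) = 0 := by
      have hh : (∑ i, (vb i ⬝ᵥ (M i).mulVec (vb i) + vb i ⬝ᵥ (K i).mulVec (db i)
          + β * (db i ⬝ᵥ (M i).mulVec (vb i) + db i ⬝ᵥ (K i).mulVec (db i))))
          = SA + SB + β * (SC + SE) := by
        rw [hSA, hSB, hSC, hSE]
        simp only [Finset.sum_add_distrib, ← Finset.mul_sum]
      rw [← hh]; exact E1
    have hdiff2 : FF (n+1) - FF n = Δt*(2*SB) + (Δt^2*(1-2*γ))*SF
        + β*(Δt*(2*SC)) + β*((Δt^2*(1-2*γ))*SA) := by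
      have hsum : FF (n+1) - FF n = ∑ i, ((Δt * (2 * (vb i ⬝ᵥ (K i).mulVec (db i)))
          + (Δt^2*(1-2*γ)) * (vb i ⬝ᵥ (K i).mulVec (vb i)))
          + β*(Δt * (2 * (db i ⬝ᵥ (M i).mulVec (vb i)))
          + (Δt^2*(1-2*γ)) * (vb i ⬝ᵥ (M i).mulVec (vb i)))) := by
        simp only [hFF]
        rw [← Finset.sum_sub_distrib]
        refine Finset.sum_congr rfl fun i _ => ?_
        have h1 := hKd i
        have h2 := hMd i
        linear_combination h1 + β * h2
      rw [hsum, hSA, hSB, hSC, hSF]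
      simp only [Finset.sum_add_distrib, ← Finset.mul_sum]
      ring
    have hSpos : 0 ≤ (1+α*(γ-1/2))*SA + (Δt*(γ-1/2))*SF := by
      have h : ∀ i : Fin S, 0 ≤ (1+α*(γ-1/2))*(vb i ⬝ᵥ (M i).mulVec (vb i))
          + (Δt*(γ-1/2))*(vb i ⬝ᵥ (K i).mulVec (vb i)) := by
        intro i
        have h0 := psd_nonneg (hAt i) (vb i)
        have hexp : vb i ⬝ᵥ ((1+α*(γ-1/2)) • M i + (Δt*(γ-1/2)) • K i).mulVec (vb i)
            = (1+α*(γ-1/2))*(vb i ⬝ᵥ (M i).mulVec (vb i))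
              + (Δt*(γ-1/2))*(vb i ⬝ᵥ (K i).mulVec (vb i)) := by
          rw [Matrix.add_mulVec, Matrix.smul_mulVec, Matrix.smul_mulVec,
            dotProduct_add, dotProduct_smul, dotProduct_smul, smul_eq_mul, smul_eq_mul]
        rw [hexp] at h0; exact h0
      have htot := Finset.sum_nonneg (fun i (_ : i ∈ Finset.univ) => h i)
      have heq2 : (∑ i, ((1+α*(γ-1/2))*(vb i ⬝ᵥ (M i).mulVec (vb i))
          + (Δt*(γ-1/2))*(vb i ⬝ᵥ (K i).mulVec (vb i))))
          = (1+α*(γ-1/2))*SA + (Δt*(γ-1/2))*SF := by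
        rw [hSA, hSF]
        simp only [Finset.sum_add_distrib, ← Finset.mul_sum]
      rw [heq2] at htot; exact htot
    have hSEpos : 0 ≤ SE := by
      rw [hSE]; exact Finset.sum_nonneg fun i _ => psd_nonneg (hK i) _
    have hfin : FF (n+1) - FF n
        = -(2*Δt)*((1+α*(γ-1/2))*SA + (Δt*(γ-1/2))*SF) - (2*α)*SE := by
      linear_combination hdiff2 + 2*Δt*E1' + (Δt*(1-2*γ)*SA - 2*SE)*hβΔ
    have h1 : 0 ≤ 2*Δt*((1+α*(γ-1/2))*SA + (Δt*(γ-1/2))*SF) :=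
      mul_nonneg (by linarith) hSpos
    have h2 : 0 ≤ 2*α*SE := mul_nonneg (by linarith) hSEpos
    linarith [hfin, h1, h2]
  have hFle : ∀ n, FF n ≤ FF 0 := by
    intro n
    induction n with
    | zero => exact le_refl _
    | succ n ih => exact le_trans (hFstep n) ih
  have hdK : ∀ (i : Fin S) (n : ℕ), d i n ⬝ᵥ (K i).mulVec (d i n) ≤ FF 0 := by
    intro i n
    have h1 : d i n ⬝ᵥ (K i).mulVec (d i n) + β * (d i n ⬝ᵥ (M i).mulVec (d i n)) ≤ FF n := by
      simp only [hFF]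
      exact Finset.single_le_sum (fun j (_ : j ∈ Finset.univ) => hterm_nonneg j n)
        (Finset.mem_univ i)
    have h2 : 0 ≤ β * (d i n ⬝ᵥ (M i).mulVec (d i n)) :=
      mul_nonneg hβ.le (psd_nonneg (hM i).posSemidef _)
    linarith [hFle n]
  have hdM : ∀ (i : Fin S) (n : ℕ), d i n ⬝ᵥ (M i).mulVec (d i n) ≤ FF 0 / β := by
    intro i n
    have h1 : d i n ⬝ᵥ (K i).mulVec (d i n) + β * (d i n ⬝ᵥ (M i).mulVec (d i n)) ≤ FF n := by
      simp only [hFF]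
      exact Finset.single_le_sum (fun j (_ : j ∈ Finset.univ) => hterm_nonneg j n)
        (Finset.mem_univ i)
    have h2 : 0 ≤ d i n ⬝ᵥ (K i).mulVec (d i n) := psd_nonneg (hK i) _
    rw [le_div_iff₀ hβ]
    nlinarith [hFle n]
  choose μf hμpos hμ using fun i => posdef_coercive (hM i)
  choose κf hκpos hκ using fun i => dominated (K i) (M i) (hM i)
  choose κc hκcpos hκc using fun i => mulVec_dot_dominated (C i) (M i) (hM i)
  set cstar : ℝ := ∑ i, (Real.sqrt (κf i) * Real.sqrt (FF 0)
    + β * Real.sqrt (FF 0 / β)) with hcstar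
  have hcstar_nonneg : 0 ≤ cstar := by
    rw [hcstar]
    exact Finset.sum_nonneg fun i _ => by positivity
  have hvM : ∀ (n : ℕ) (i : Fin S), v i n ⬝ᵥ (M i).mulVec (v i n) ≤ cstar^2 := by
    intro n
    set X : ℝ := ∑ i, v i n ⬝ᵥ (M i).mulVec (v i n) with hX
    have hXnn : 0 ≤ X := Finset.sum_nonneg fun i _ => psd_nonneg (hM i).posSemidef _
    have hXi : ∀ i, v i n ⬝ᵥ (M i).mulVec (v i n) ≤ X := by
      intro i
      rw [hX]
      exact Finset.single_le_sum
        (fun j (_ : j ∈ Finset.univ) => psd_nonneg (hM j).posSemidef (v j n))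
        (Finset.mem_univ i)
    have E0 := pairing (fun i => v i n) (fun i => d i n) (lam n)
      (fun i => heq i n) (hcont n)
    have hsplit : X + (∑ i, v i n ⬝ᵥ (K i).mulVec (d i n))
        + β * ((∑ i, d i n ⬝ᵥ (M i).mulVec (v i n))
          + (∑ i, d i n ⬝ᵥ (K i).mulVec (d i n))) = 0 := by
      have hh : (∑ i, (v i n ⬝ᵥ (M i).mulVec (v i n) + v i n ⬝ᵥ (K i).mulVec (d i n)
          + β * (d i n ⬝ᵥ (M i).mulVec (v i n) + d i n ⬝ᵥ (K i).mulVec (d i n))))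
          = X + (∑ i, v i n ⬝ᵥ (K i).mulVec (d i n))
          + β * ((∑ i, d i n ⬝ᵥ (M i).mulVec (v i n))
            + (∑ i, d i n ⬝ᵥ (K i).mulVec (d i n))) := by
        rw [hX]
        simp only [Finset.sum_add_distrib, ← Finset.mul_sum]
      rw [← hh]; exact E0
    have per : ∀ i : Fin S,
        -(v i n ⬝ᵥ (K i).mulVec (d i n)) - β * (d i n ⬝ᵥ (M i).mulVec (v i n))
        ≤ (Real.sqrt (κf i) * Real.sqrt (FF 0) + β * Real.sqrt (FF 0 / β)) * Real.sqrt X := by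
      intro i
      have c1 : |v i n ⬝ᵥ (K i).mulVec (d i n)|
          ≤ Real.sqrt (κf i) * Real.sqrt (FF 0) * Real.sqrt X := by
        calc |v i n ⬝ᵥ (K i).mulVec (d i n)|
            ≤ Real.sqrt (v i n ⬝ᵥ (K i).mulVec (v i n))
              * Real.sqrt (d i n ⬝ᵥ (K i).mulVec (d i n)) := psd_cs_abs (hK i) _ _
          _ ≤ Real.sqrt (κf i * X) * Real.sqrt (FF 0) := by
              refine mul_le_mul (Real.sqrt_le_sqrt ?_) (Real.sqrt_le_sqrt (hdK i n))
                (Real.sqrt_nonneg _) (Real.sqrt_nonneg _)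
              calc v i n ⬝ᵥ (K i).mulVec (v i n)
                  ≤ κf i * (v i n ⬝ᵥ (M i).mulVec (v i n)) := hκ i _
                _ ≤ κf i * X := mul_le_mul_of_nonneg_left (hXi i) (hκpos i).le
          _ = Real.sqrt (κf i) * Real.sqrt (FF 0) * Real.sqrt X := by
              rw [Real.sqrt_mul (hκpos i).le]; ring
      have c2 : |d i n ⬝ᵥ (M i).mulVec (v i n)| ≤ Real.sqrt (FF 0 / β) * Real.sqrt X := by
        calc |d i n ⬝ᵥ (M i).mulVec (v i n)|
            ≤ Real.sqrt (d i n ⬝ᵥ (M i).mulVec (d i n))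
              * Real.sqrt (v i n ⬝ᵥ (M i).mulVec (v i n)) := psd_cs_abs (hM i).posSemidef _ _
          _ ≤ Real.sqrt (FF 0 / β) * Real.sqrt X :=
              mul_le_mul (Real.sqrt_le_sqrt (hdM i n)) (Real.sqrt_le_sqrt (hXi i))
                (Real.sqrt_nonneg _) (Real.sqrt_nonneg _)
      have a1 : -(v i n ⬝ᵥ (K i).mulVec (d i n)) ≤ |v i n ⬝ᵥ (K i).mulVec (d i n)| :=
        neg_le_abs _
      have a2 : -(d i n ⬝ᵥ (M i).mulVec (v i n)) ≤ |d i n ⬝ᵥ (M i).mulVec (v i n)| :=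
        neg_le_abs _
      have a3 : β * (-(d i n ⬝ᵥ (M i).mulVec (v i n)))
          ≤ β * |d i n ⬝ᵥ (M i).mulVec (v i n)| := mul_le_mul_of_nonneg_left a2 hβ.le
      have a4 : β * |d i n ⬝ᵥ (M i).mulVec (v i n)|
          ≤ β * (Real.sqrt (FF 0 / β) * Real.sqrt X) := mul_le_mul_of_nonneg_left c2 hβ.le
      nlinarith [c1]
    have hepos : 0 ≤ ∑ i, d i n ⬝ᵥ (K i).mulVec (d i n) :=
      Finset.sum_nonneg fun i _ => psd_nonneg (hK i) _
    have hXle : X ≤ ∑ i, (-(v i n ⬝ᵥ (K i).mulVec (d i n))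
        - β * (d i n ⬝ᵥ (M i).mulVec (v i n))) := by
      have hsum : (∑ i, (-(v i n ⬝ᵥ (K i).mulVec (d i n))
          - β * (d i n ⬝ᵥ (M i).mulVec (v i n))))
          = -(∑ i, v i n ⬝ᵥ (K i).mulVec (d i n))
            - β * (∑ i, d i n ⬝ᵥ (M i).mulVec (v i n)) := by
        simp only [Finset.sum_sub_distrib, Finset.sum_neg_distrib, ← Finset.mul_sum]
      have h5 : 0 ≤ β * (∑ i, d i n ⬝ᵥ (K i).mulVec (d i n)) := mul_nonneg hβ.le hepos
      rw [hsum]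
      linarith [hsplit]
    have hXc : X ≤ cstar * Real.sqrt X := by
      calc X ≤ ∑ i, (-(v i n ⬝ᵥ (K i).mulVec (d i n))
          - β * (d i n ⬝ᵥ (M i).mulVec (v i n))) := hXle
        _ ≤ ∑ i, ((Real.sqrt (κf i) * Real.sqrt (FF 0)
            + β * Real.sqrt (FF 0 / β)) * Real.sqrt X) :=
            Finset.sum_le_sum fun i _ => per i
        _ = cstar * Real.sqrt X := by rw [hcstar, ← Finset.sum_mul]
    intro i
    have hsq : Real.sqrt X * Real.sqrt X = X := Real.mul_self_sqrt hXnn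
    have h6 : v i n ⬝ᵥ (M i).mulVec (v i n) ≤ X := hXi i
    nlinarith [Real.sqrt_nonneg X, hcstar_nonneg, hXc, hsq]
  have hv : ∀ (i : Fin S) (n : ℕ), _root_.enorm (v i n) ≤ Real.sqrt (cstar^2 / μf i) := by
    intro i n
    have h1 : μf i * (v i n ⬝ᵥ v i n) ≤ cstar^2 := le_trans (hμ i (v i n)) (hvM n i)
    refine enorm_sq_le ?_
    rw [le_div_iff₀ (hμpos i)]
    nlinarith [h1]
  set Dr : ℝ := ∑ i, Real.sqrt (κc i * (FF 0 / β)) with hDr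
  have hDrnn : 0 ≤ Dr := by
    rw [hDr]; exact Finset.sum_nonneg fun i _ => Real.sqrt_nonneg _
  have hdrift : ∀ n, _root_.enorm (∑ i, (C i).mulVec (d i n)) ≤ Dr := by
    intro n
    calc _root_.enorm (∑ i, (C i).mulVec (d i n)) ≤ ∑ i, _root_.enorm ((C i).mulVec (d i n)) :=
        enorm_sum_le _ _
      _ ≤ ∑ i, Real.sqrt (κc i * (FF 0 / β)) := by
          refine Finset.sum_le_sum fun i _ => ?_
          refine enorm_sq_le ?_
          calc (C i).mulVec (d i n) ⬝ᵥ (C i).mulVec (d i n)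
              ≤ κc i * (d i n ⬝ᵥ (M i).mulVec (d i n)) := hκc i _
            _ ≤ κc i * (FF 0 / β) := mul_le_mul_of_nonneg_left (hdM i n) (hκcpos i).le
      _ = Dr := hDr.symm
  have hdeq : ∀ n, _root_.enorm (∑ i, (C i).mulVec (d i n))
      = (Δt / α) * _root_.enorm (∑ i, (C i).mulVec (v i n)) := by
    intro n
    have h0 := hcont n
    have h1 : (∑ i, (C i).mulVec (v i n)) = (-β) • (∑ i, (C i).mulVec (d i n)) := by
      rw [neg_smul]; exact eq_neg_of_add_eq_zero_left h0
    rw [h1, enorm_smul, abs_neg, abs_of_pos hβ, ← mul_assoc]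
    have hone : Δt / α * β = 1 := by rw [hβdef]; field_simp
    rw [hone, one_mul]
  have hBvnn : ∀ i : Fin S, (0:ℝ) ≤ Real.sqrt (cstar^2 / μf i) := fun i => Real.sqrt_nonneg _
  have hsumBv : (0:ℝ) ≤ ∑ i, Real.sqrt (cstar^2 / μf i) :=
    Finset.sum_nonneg fun i _ => hBvnn i
  refine ⟨1 + (∑ i, Real.sqrt (cstar^2 / μf i)) + Dr, by linarith, ?_, ?_⟩
  · intro i n
    have h1 : Real.sqrt (cstar^2 / μf i) ≤ ∑ j, Real.sqrt (cstar^2 / μf j) :=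
      Finset.single_le_sum (fun j (_ : j ∈ Finset.univ) => hBvnn j) (Finset.mem_univ i)
    have h2 := hv i n
    linarith
  · intro n
    refine ⟨hdeq n, ?_⟩
    have h1 := hdrift n
    linarith
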